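/- Define B_1 = {1,2,3} and, for n ≥ 2, B_n = {3·5^{n−2}, 9·5^{n−2}, 15·5^{n−2}}. For any N, the map sending a legal choice on bins 1,...,N to its value (the sum of all chosen elements) is injective: two legal choices with the same value are identical. In particular every integer that is representable as such a sum has a unique such representation. -/

import Mathlib

/-- The bins of the `2`-nary sequence with `b_n = 3`, `A_n = {0,2}`:
`B₁ = {1,2,3}` and `Bₙ = {3·5^{n−2}, 9·5^{n−2}, 15·5^{n−2}}` for `n ≥ 2`. -/
def gbin : ℕ → Finset ℕ
  | 0 => ∅
  | 1 => {1, 2, 3}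
  | (n + 2) => {3 * 5 ^ n, 9 * 5 ^ n, 15 * 5 ^ n}

lemma pair_subsets {a b c : ℕ} {s : Finset ℕ} (hs : s ⊆ {a,b,c}) (h2 : s.card = 2) :
    s = {a,b} ∨ s = {a,c} ∨ s = {b,c} := by
  obtain ⟨x, y, hxy, rfl⟩ := Finset.card_eq_two.mp h2
  have hx : x ∈ ({a,b,c} : Finset ℕ) := hs (by simp)
  have hy : y ∈ ({a,b,c} : Finset ℕ) := hs (by simp)
  simp only [Finset.mem_insert, Finset.mem_singleton] at hx hy
  rcases hx with rfl|rfl|rfl <;> rcases hy with rfl|rfl|rfl <;>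
    first
      | exact absurd rfl hxy
      | tauto
      | (rw [Finset.pair_comm]; tauto)

lemma pair_sum_inj {a b c : ℕ} (ha : 0 < a) (hab : a < b) (hbc : b < c)
    {s t : Finset ℕ} (hs : s ⊆ {a,b,c}) (hs2 : s.card = 0 ∨ s.card = 2)
    (ht : t ⊆ {a,b,c}) (ht2 : t.card = 0 ∨ t.card = 2)
    (h : ∑ x ∈ s, x = ∑ x ∈ t, x) : s = t := by
  rcases hs2 with hs2 | hs2 <;> rcases ht2 with ht2 | ht2
  · rw [Finset.card_eq_zero.mp hs2, Finset.card_eq_zero.mp ht2]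
  · rw [Finset.card_eq_zero.mp hs2, Finset.sum_empty] at h
    rcases pair_subsets ht ht2 with rfl|rfl|rfl <;>
      rw [Finset.sum_pair (by omega)] at h <;> omega
  · rw [Finset.card_eq_zero.mp ht2, Finset.sum_empty] at h
    rcases pair_subsets hs hs2 with rfl|rfl|rfl <;>
      rw [Finset.sum_pair (by omega)] at h <;> omega
  · rcases pair_subsets hs hs2 with rfl|rfl|rfl <;>
      rcases pair_subsets ht ht2 with rfl|rfl|rfl <;>
      first
        | rfl
        | (rw [Finset.sum_pair (by omega : a ≠ b)] at h
           first
             | (rw [Finset.sum_pair (show a ≠ c by omega)] at h; exact absurd h (by omega))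
             | (rw [Finset.sum_pair (show b ≠ c by omega)] at h; exact absurd h (by omega)))
        | (rw [Finset.sum_pair (show a ≠ c by omega)] at h
           first
             | (rw [Finset.sum_pair (show a ≠ b by omega)] at h; exact absurd h (by omega))
             | (rw [Finset.sum_pair (show b ≠ c by omega)] at h; exact absurd h (by omega)))
        | (rw [Finset.sum_pair (show b ≠ c by omega)] at h
           first
             | (rw [Finset.sum_pair (show a ≠ b by omega)] at h; exact absurd h (by omega))
             | (rw [Finset.sum_pair (show a ≠ c by omega)] at h; exact absurd h (by omega)))

lemma bin_val {n : ℕ} {s : Finset ℕ} (hs : s ⊆ gbin (n+2))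
    (hs2 : s.card = 0 ∨ s.card = 2) :
    ∃ k, k ≤ 4 ∧ ∑ x ∈ s, x = 6 * 5 ^ n * k := by
  have hp : 0 < 5 ^ n := Nat.pow_pos (by norm_num)
  rcases hs2 with h0 | h2
  · exact ⟨0, by omega, by rw [Finset.card_eq_zero.mp h0]; simp⟩
  · have hs' : s ⊆ {3 * 5 ^ n, 9 * 5 ^ n, 15 * 5 ^ n} := hs
    rcases pair_subsets hs' h2 with rfl|rfl|rfl
    · exact ⟨2, by omega, by rw [Finset.sum_pair (by omega)]; ring⟩
    · exact ⟨3, by omega, by rw [Finset.sum_pair (by omega)]; ring⟩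
    · exact ⟨4, by omega, by rw [Finset.sum_pair (by omega)]; ring⟩

lemma bin1_le {s : Finset ℕ} (hs : s ⊆ gbin 1) (hs2 : s.card = 0 ∨ s.card = 2) :
    ∑ x ∈ s, x ≤ 5 := by
  have hs' : s ⊆ {1, 2, 3} := hs
  rcases hs2 with h0 | h2
  · rw [Finset.card_eq_zero.mp h0]; simp
  · rcases pair_subsets hs' h2 with rfl|rfl|rfl <;>
      rw [Finset.sum_pair (by omega)] <;> omega

lemma total_lt (c : ℕ → Finset ℕ) (hc : ∀ n, c n ⊆ gbin n)
    (hc2 : ∀ n, (c n).card = 0 ∨ (c n).card = 2) :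
    ∀ N, ∑ n ∈ Finset.Icc 1 (N+1), ∑ x ∈ c n, x < 6 * 5 ^ N := by
  intro N
  induction N with
  | zero => simpa using lt_of_le_of_lt (bin1_le (hc 1) (hc2 1)) (by norm_num)
  | succ M ih =>
    have hp : 0 < 5 ^ M := Nat.pow_pos (by norm_num)
    rw [Finset.sum_Icc_succ_top (by omega)]
    obtain ⟨k, hk4, hk⟩ := bin_val (hc (M+2)) (hc2 (M+2))
    have : (6:ℕ) * 5 ^ (M+1) = 30 * 5 ^ M := by ring
    rw [this, hk]
    have h24 : 6 * 5 ^ M * k ≤ 24 * 5 ^ M := by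
      calc 6 * 5 ^ M * k ≤ 6 * 5 ^ M * 4 := Nat.mul_le_mul_left _ hk4
        _ = 24 * 5 ^ M := by ring
    omega


/-- Legal choices (each bin contributes either no elements or a 2-element subset) on
bins `1,…,N` with the same value are identical. -/
theorem gnary_unique_decomposition (N : ℕ) (c d : ℕ → Finset ℕ)
    (hc : ∀ n, c n ⊆ gbin n) (hc2 : ∀ n, (c n).card = 0 ∨ (c n).card = 2)
    (hd : ∀ n, d n ⊆ gbin n) (hd2 : ∀ n, (d n).card = 0 ∨ (d n).card = 2)
    (hsum : ∑ n ∈ Finset.Icc 1 N, ∑ x ∈ c n, x = ∑ n ∈ Finset.Icc 1 N, ∑ x ∈ d n, x) :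
    ∀ n ∈ Finset.Icc 1 N, c n = d n := by
  induction N with
  | zero => simp
  | succ M ih =>
    rw [Finset.sum_Icc_succ_top (by omega), Finset.sum_Icc_succ_top (by omega)] at hsum
    have key : (∑ n ∈ Finset.Icc 1 M, ∑ x ∈ c n, x = ∑ n ∈ Finset.Icc 1 M, ∑ x ∈ d n, x)
        ∧ ∑ x ∈ c (M+1), x = ∑ x ∈ d (M+1), x := by
      match M with
      | 0 => simpa using hsum
      | M' + 1 =>
        obtain ⟨k, hk4, hk⟩ := bin_val (hc (M'+2)) (hc2 (M'+2))
        obtain ⟨l, hl4, hl⟩ := bin_val (hd (M'+2)) (hd2 (M'+2))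
        have hrc := total_lt c hc hc2 M'
        have hrd := total_lt d hd hd2 M'
        rw [hk, hl] at hsum
        have hp : 0 < 5 ^ M' := Nat.pow_pos (by norm_num)
        have hkl : k = l := by
          interval_cases k <;> interval_cases l <;> omega
        subst hkl
        constructor
        · omega
        · rw [hk, hl]
    have htop : c (M+1) = d (M+1) := by
      match M with
      | 0 =>
        exact pair_sum_inj (a := 1) (b := 2) (c := 3) (by norm_num) (by norm_num)
          (by norm_num) (hc 1) (hc2 1) (hd 1) (hd2 1) key.2
      | M' + 1 =>
        have hp : 0 < 5 ^ M' := Nat.pow_pos (by norm_num)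
        exact pair_sum_inj (a := 3 * 5 ^ M') (b := 9 * 5 ^ M') (c := 15 * 5 ^ M')
          (by omega) (by omega) (by omega) (hc (M'+2)) (hc2 (M'+2)) (hd (M'+2)) (hd2 (M'+2)) key.2
    intro n hn
    rw [Finset.mem_Icc] at hn
    rcases eq_or_lt_of_le hn.2 with rfl | hlt
    · exact htop
    · exact ih key.1 n (Finset.mem_Icc.mpr ⟨hn.1, by omega⟩)
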